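/- Let G be a graph such that G has a burning sequence of length b(G) whose final source is superfluous (b(G) = b*(G)), and let H = ILT_l(G). Then b(H) = b(G). -/

import Mathlib

variable {V : Type*}

/-- Zero forcing closure: vertices eventually forced starting from `S`. -/
inductive ZFClos (G : SimpleGraph V) (S : Set V) : V → Prop
  | mem (v : V) : v ∈ S → ZFClos G S v
  | force (u v : V) : ZFClos G S u → G.Adj u v →
      (∀ w, G.Adj u w → w ≠ v → ZFClos G S w) → ZFClos G S v

/-- `S` is a zero forcing set of `G`. -/
def IsZFSet (G : SimpleGraph V) (S : Set V) : Prop := ∀ v, ZFClos G S v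

/-- `S` is a failed zero forcing set of `G`. -/
def IsFailedZFSet (G : SimpleGraph V) (S : Set V) : Prop := ¬ IsZFSet G S

/-- The zero forcing number `Z(G)`. -/
noncomputable def zfNumber (G : SimpleGraph V) [Fintype V] : ℕ :=
  sInf {n | ∃ S : Finset V, S.card = n ∧ IsZFSet G ↑S}

/-- The failed zero forcing number `FZ(G)`. -/
noncomputable def fzNumber (G : SimpleGraph V) [Fintype V] : ℕ :=
  sSup {n | ∃ S : Finset V, S.card = n ∧ IsFailedZFSet G ↑S}

/-- Loop zero forcing closure. -/
inductive LZFClos (G : SimpleGraph V) (S : Set V) : V → Prop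
  | mem (v : V) : v ∈ S → LZFClos G S v
  | force (u v : V) : LZFClos G S u → G.Adj u v →
      (∀ w, G.Adj u w → w ≠ v → LZFClos G S w) → LZFClos G S v
  | loop (v : V) : (∀ w, G.Adj v w → LZFClos G S w) → LZFClos G S v

/-- One ILT step: simultaneously clone every vertex.  The clone of `b` is `Sum.inr b`,
adjacent to the closed neighborhood of `b`; clones form an independent set. -/
def iltStep (G : SimpleGraph V) : SimpleGraph (V ⊕ V) where
  Adj x y :=
    match x, y with
    | Sum.inl a, Sum.inl b => G.Adj a b
    | Sum.inl a, Sum.inr b => a = b ∨ G.Adj a b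
    | Sum.inr a, Sum.inl b => b = a ∨ G.Adj b a
    | Sum.inr _, Sum.inr _ => False
  symm := by
    constructor
    rintro (a | a) (b | b) h
    · exact G.symm.1 _ _ h
    · exact h
    · exact h
    · exact h.elim
  loopless := by
    constructor
    rintro (a | a) h
    · exact G.loopless.1 a h
    · exact h

/-- One ILAT step: simultaneously anticlone every vertex.  The anticlone of `b` is
`Sum.inr b`, adjacent to the complement of the closed neighborhood of `b`. -/
def ilatStep (G : SimpleGraph V) : SimpleGraph (V ⊕ V) where
  Adj x y :=
    match x, y with
    | Sum.inl a, Sum.inl b => G.Adj a b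
    | Sum.inl a, Sum.inr b => a ≠ b ∧ ¬ G.Adj a b
    | Sum.inr a, Sum.inl b => b ≠ a ∧ ¬ G.Adj b a
    | Sum.inr _, Sum.inr _ => False
  symm := by
    constructor
    rintro (a | a) (b | b) h
    · exact G.symm.1 _ _ h
    · exact h
    · exact h
    · exact h.elim
  loopless := by
    constructor
    rintro (a | a) h
    · exact G.loopless.1 a h
    · exact h

/-- One IIM step: each vertex `b` is cloned if `c b = true` and anticloned otherwise. -/
def iimStep (G : SimpleGraph V) (c : V → Bool) : SimpleGraph (V ⊕ V) where
  Adj x y :=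
    match x, y with
    | Sum.inl a, Sum.inl b => G.Adj a b
    | Sum.inl a, Sum.inr b => if c b then a = b ∨ G.Adj a b else a ≠ b ∧ ¬ G.Adj a b
    | Sum.inr a, Sum.inl b => if c a then b = a ∨ G.Adj b a else b ≠ a ∧ ¬ G.Adj b a
    | Sum.inr _, Sum.inr _ => False
  symm := by
    constructor
    rintro (a | a) (b | b) h
    · exact G.symm.1 _ _ h
    · exact h
    · exact h
    · exact h.elim
  loopless := by
    constructor
    rintro (a | a) h
    · exact G.loopless.1 a h
    · exact h

/-- Adding a single clone of the vertex `v` (the new vertex is `none`). -/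
def cloneOne (G : SimpleGraph V) (v : V) : SimpleGraph (Option V) where
  Adj x y :=
    match x, y with
    | some a, some b => G.Adj a b
    | some a, none => a = v ∨ G.Adj a v
    | none, some b => b = v ∨ G.Adj b v
    | none, none => False
  symm := by
    constructor
    rintro (_ | a) (_ | b) h
    · exact h.elim
    · exact h
    · exact h
    · exact G.symm.1 _ _ h
  loopless := by
    constructor
    rintro (_ | a) h
    · exact h
    · exact G.loopless.1 a h

/-- The vertex type after `l` doubling steps. -/
def IterV (V : Type*) : ℕ → Type _
  | 0 => V
  | l + 1 => IterV V l ⊕ IterV V l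

instance iterVFintype [Fintype V] : ∀ l, Fintype (IterV V l)
  | 0 => ‹Fintype V›
  | l + 1 =>
    haveI : Fintype (IterV V l) := iterVFintype l
    inferInstanceAs (Fintype (IterV V l ⊕ IterV V l))

/-- `ILT_l(G)`. -/
def iltIter (G : SimpleGraph V) : ∀ l, SimpleGraph (IterV V l)
  | 0 => G
  | l + 1 => iltStep (iltIter G l)

/-- `ILAT_l(G)`. -/
def ilatIter (G : SimpleGraph V) : ∀ l, SimpleGraph (IterV V l)
  | 0 => G
  | l + 1 => ilatStep (ilatIter G l)

/-- Iterated Independent Model: at step `n+1`, vertex `b` of the current graph is cloned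
if `c n b = true` and anticloned otherwise. -/
def iimIter (G : SimpleGraph V) (c : ∀ n, IterV V n → Bool) : ∀ l, SimpleGraph (IterV V l)
  | 0 => G
  | l + 1 => iimStep (iimIter G c l) (c l)

/-- The level (time step of creation) of a vertex; level 0 is the base graph. -/
def iterLevel : ∀ {l}, IterV V l → ℕ
  | 0, _ => 0
  | _ + 1, Sum.inl x => iterLevel x
  | l + 1, Sum.inr _ => l + 1

/-- The unique ancestor in the base graph of a vertex of an iterated graph. -/
def iterProj : ∀ {l}, IterV V l → V
  | 0, v => v
  | _ + 1, Sum.inl x => iterProj x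
  | _ + 1, Sum.inr x => iterProj x

/-- The copy of a base vertex `v` (level 0) inside `IterV V l`. -/
def iterInj0 : ∀ l, V → IterV V l
  | 0, v => v
  | l + 1, v => Sum.inl (iterInj0 l v)

/-- The level-1 clone/anticlone of a base vertex `v`, viewed inside `IterV V (l+1)`. -/
def iterInj1 : ∀ l, V → IterV V (l + 1)
  | 0, v => Sum.inr v
  | l + 1, v => Sum.inl (iterInj1 l v)

/-- The set of burned vertices after `t` burning steps, with sources `s 0, s 1, …`:
at each step the fire spreads to all neighbors of burned vertices and a new source burns. -/
def burnSet (G : SimpleGraph V) (s : ℕ → V) : ℕ → Set V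
  | 0 => ∅
  | t + 1 => insert (s t) (burnSet G s t ∪ {v | ∃ u ∈ burnSet G s t, G.Adj u v})

/-- `G` can be fully burned in `k` steps. -/
def BurnsIn (G : SimpleGraph V) (k : ℕ) : Prop :=
  ∃ s : ℕ → V, burnSet G s k = Set.univ

/-- `G` can be fully burned in `k` steps with the final source superfluous:
the fire spread alone covers everything at step `k`. -/
def BurnsInStar (G : SimpleGraph V) (k : ℕ) : Prop :=
  ∃ s : ℕ → V,
    (burnSet G s (k - 1) ∪ {v | ∃ u ∈ burnSet G s (k - 1), G.Adj u v}) = Set.univ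

/-- The burning number `b(G)`. -/
noncomputable def burningNumber (G : SimpleGraph V) : ℕ := sInf {k | BurnsIn G k}

/-- The burning number `b*(G)` with superfluous final source. -/
noncomputable def burningNumberStar (G : SimpleGraph V) : ℕ := sInf {k | BurnsInStar G k}

lemma burnSet_subset_succ (G : SimpleGraph V) (s : ℕ → V) (t : ℕ) :
    burnSet G s t ⊆ burnSet G s (t + 1) := fun v hv =>
  Set.mem_insert_iff.mpr (Or.inr (Set.mem_union_left _ hv))

lemma iterProj_iterInj0 : ∀ (l : ℕ) (v : V), iterProj (iterInj0 l v) = v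
  | 0, _ => rfl
  | l + 1, v => iterProj_iterInj0 l v

lemma adj_inj0 (G : SimpleGraph V) : ∀ (l : ℕ) {u v : V}, G.Adj u v →
    (iltIter G l).Adj (iterInj0 l u) (iterInj0 l v)
  | 0, _, _, h => h
  | l + 1, _, _, h => adj_inj0 G l h

lemma adj_proj (G : SimpleGraph V) : ∀ (l : ℕ) {x y : IterV V l},
    (iltIter G l).Adj x y → iterProj x = iterProj y ∨ G.Adj (iterProj x) (iterProj y)
  | 0, _, _, h => Or.inr h
  | l + 1, Sum.inl _, Sum.inl _, h => adj_proj G l h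
  | l + 1, Sum.inl a, Sum.inr b, h =>
      h.elim (fun e => Or.inl (show iterProj a = iterProj b from congrArg _ e)) (adj_proj G l)
  | l + 1, Sum.inr a, Sum.inl b, h =>
      h.elim (fun e => Or.inl (show iterProj b = iterProj a from congrArg _ e).symm)
        (fun h' => ((adj_proj G l h').imp Eq.symm fun h'' => h''.symm))
  | l + 1, Sum.inr _, Sum.inr _, h => h.elim

lemma adj_lift (G : SimpleGraph V) : ∀ (l : ℕ) {u : V} {x : IterV V l},
    G.Adj u (iterProj x) → (iltIter G l).Adj (iterInj0 l u) x
  | 0, _, _, h => h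
  | l + 1, u, Sum.inl y, h => adj_lift G l h
  | l + 1, u, Sum.inr y, h => Or.inr (adj_lift G l h)

lemma ancestor_adj (G : SimpleGraph V) : ∀ (l : ℕ) (x : IterV V l),
    x = iterInj0 l (iterProj x) ∨ (iltIter G l).Adj (iterInj0 l (iterProj x)) x
  | 0, _ => Or.inl rfl
  | l + 1, Sum.inl y => (ancestor_adj G l y).imp (congrArg Sum.inl) id
  | l + 1, Sum.inr y =>
      Or.inr ((ancestor_adj G l y).elim (fun e => Or.inl e.symm) Or.inr)

lemma proj_burn (G : SimpleGraph V) (l : ℕ) (s' : ℕ → IterV V l) :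
    ∀ (t : ℕ) (x : IterV V l), x ∈ burnSet (iltIter G l) s' t →
      iterProj x ∈ burnSet G (fun n => iterProj (s' n)) t := by
  intro t
  induction t with
  | zero => exact fun x hx => hx.elim
  | succ t ih =>
    intro x hx
    simp only [burnSet, Set.mem_insert_iff, Set.mem_union, Set.mem_setOf_eq] at hx ⊢
    rcases hx with rfl | hx | ⟨u, hu, hadj⟩
    · exact Or.inl rfl
    · exact Or.inr (Or.inl (ih x hx))
    · rcases adj_proj G l hadj with he | ha
      · exact Or.inr (Or.inl (he ▸ ih u hu))
      · exact Or.inr (Or.inr ⟨_, ih u hu, ha⟩)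

lemma inj_burn (G : SimpleGraph V) (l : ℕ) (s : ℕ → V) :
    ∀ (t : ℕ) (v : V), v ∈ burnSet G s t →
      iterInj0 l v ∈ burnSet (iltIter G l) (fun n => iterInj0 l (s n)) t := by
  intro t
  induction t with
  | zero => exact fun v hv => hv.elim
  | succ t ih =>
    intro v hv
    simp only [burnSet, Set.mem_insert_iff, Set.mem_union, Set.mem_setOf_eq] at hv ⊢
    rcases hv with rfl | hv | ⟨u, hu, hadj⟩
    · exact Or.inl rfl
    · exact Or.inr (Or.inl (ih v hv))
    · exact Or.inr (Or.inr ⟨_, ih u hu, adj_inj0 G l hadj⟩)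

lemma burnsIn_of_burnsIn_ilt (G : SimpleGraph V) (l : ℕ) {k : ℕ}
    (h : BurnsIn (iltIter G l) k) : BurnsIn G k := by
  obtain ⟨s', hs'⟩ := h
  refine ⟨fun n => iterProj (s' n), Set.eq_univ_of_forall fun v => ?_⟩
  have : iterInj0 l v ∈ burnSet (iltIter G l) s' k := hs' ▸ Set.mem_univ _
  have := proj_burn G l s' k _ this
  rwa [iterProj_iterInj0] at this

lemma burnsIn_ilt_of_star (G : SimpleGraph V) (l : ℕ) {k : ℕ}
    (h : BurnsInStar G k) : BurnsIn (iltIter G l) k := by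
  obtain ⟨s, hs⟩ := h
  refine ⟨fun n => iterInj0 l (s n), Set.eq_univ_of_forall fun x => ?_⟩
  have hx : iterProj x ∈ burnSet G s (k - 1) ∪
      {v | ∃ u ∈ burnSet G s (k - 1), G.Adj u v} := hs ▸ Set.mem_univ _
  cases k with
  | zero =>
    exfalso
    rcases hx with hx | ⟨u, hu, _⟩
    · exact hx
    · exact hu
  | succ m =>
    simp only [Nat.add_sub_cancel] at hx
    simp only [burnSet, Set.mem_insert_iff, Set.mem_union, Set.mem_setOf_eq]
    rcases hx with hx | ⟨u, hu, hadj⟩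
    · rcases ancestor_adj G l x with he | ha
      · exact Or.inr (Or.inl (he ▸ inj_burn G l s m _ hx))
      · exact Or.inr (Or.inr ⟨_, inj_burn G l s m _ hx, ha⟩)
    · exact Or.inr (Or.inr ⟨_, inj_burn G l s m _ hu, adj_lift G l hadj⟩)

lemma star_of_burnsIn (G : SimpleGraph V) {k : ℕ} (h : BurnsIn G k) :
    BurnsInStar G (k + 1) := by
  obtain ⟨s, hs⟩ := h
  refine ⟨s, Set.eq_univ_of_forall fun v => ?_⟩
  simp only [Nat.add_sub_cancel]
  exact Set.mem_union_left _ (hs ▸ Set.mem_univ v)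

/-- if `b(G) = b*(G)` then `b(ILT_l(G)) = b(G)`. -/
theorem stmt16 (G : SimpleGraph V) (l : ℕ)
    (h : burningNumber G = burningNumberStar G) :
    burningNumber (iltIter G l) = burningNumber G := by
  by_cases hne : {k | BurnsInStar G k}.Nonempty
  · have hstar : BurnsInStar G (burningNumberStar G) := Nat.sInf_mem hne
    have hB : BurnsIn (iltIter G l) (burningNumberStar G) := burnsIn_ilt_of_star G l hstar
    have hle : burningNumber (iltIter G l) ≤ burningNumber G := by
      rw [h]; exact Nat.sInf_le hB
    have hBne : {k | BurnsIn (iltIter G l) k}.Nonempty := ⟨_, hB⟩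
    have hmem : BurnsIn (iltIter G l) (burningNumber (iltIter G l)) := Nat.sInf_mem hBne
    have hge : burningNumber G ≤ burningNumber (iltIter G l) :=
      Nat.sInf_le (burnsIn_of_burnsIn_ilt G l hmem)
    exact le_antisymm hle hge
  · have hA : {k | BurnsIn G k} = ∅ := by
      by_contra hA
      obtain ⟨k, hk⟩ := Set.nonempty_iff_ne_empty.mpr hA
      exact hne ⟨k + 1, star_of_burnsIn G hk⟩
    have hBe : {k | BurnsIn (iltIter G l) k} = ∅ := by
      ext k
      simp only [Set.mem_setOf_eq, Set.mem_empty_iff_false, iff_false]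
      intro hk
      have := burnsIn_of_burnsIn_ilt G l hk
      rw [Set.eq_empty_iff_forall_notMem] at hA
      exact hA k this
    unfold burningNumber
    rw [hA, hBe]
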